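/- Let N ∈ ℝ^{n×d} and let N = U P be a polar decomposition with U having orthonormal columns and P positive semidefinite. Then ‖N - U‖ ≤ ‖Nᵀ N - id‖ in Frobenius norm. -/

import Mathlib

open Matrix

/-- The Frobenius norm of a real matrix: `‖A‖ = sqrt (trace (Aᵀ A))`. -/
noncomputable def frobNorm {m n : Type*} [Fintype m] [Fintype n]
    (A : Matrix m n ℝ) : ℝ :=
  Real.sqrt (Matrix.trace (Aᵀ * A))

lemma trace_nonneg_of_psd {d : ℕ} {Q : Matrix (Fin d) (Fin d) ℝ}
    (hQ : Q.PosSemidef) : 0 ≤ Q.trace := by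
  have hdiag : ∀ i, 0 ≤ Q i i := fun i => by
    have := hQ.dotProduct_mulVec_nonneg (Pi.single i 1)
    simpa [dotProduct, Matrix.mulVec, Pi.single_apply, Finset.sum_ite_eq',
      Finset.mul_sum] using this
  exact Finset.sum_nonneg fun i _ => hdiag i

/-- If `N = U P` is a polar decomposition (with `U` having orthonormal columns and `P`
positive semidefinite), then `‖N - U‖ ≤ ‖Nᵀ N - id‖` in Frobenius norm. -/
theorem frobNorm_sub_polar_factor_le
    (n d : ℕ) (N U : Matrix (Fin n) (Fin d) ℝ) (P : Matrix (Fin d) (Fin d) ℝ)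
    (hU : Uᵀ * U = 1) (hP : P.PosSemidef) (hNP : N = U * P) :
    frobNorm (N - U) ≤ frobNorm (Nᵀ * N - 1) := by
  have hPsym : Pᵀ = P := by
    have := hP.isHermitian.eq
    rwa [Matrix.conjTranspose_eq_transpose_of_trivial] at this
  -- N - U = U * (P - 1)
  have h1 : (N - U)ᵀ * (N - U) = (P - 1) * (P - 1) := by
    have : N - U = U * (P - 1) := by rw [hNP, Matrix.mul_sub, Matrix.mul_one]
    rw [this, Matrix.transpose_mul, Matrix.mul_assoc, ← Matrix.mul_assoc Uᵀ, hU,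
      Matrix.one_mul, Matrix.transpose_sub, hPsym, Matrix.transpose_one]
  have hNN : Nᵀ * N = P * P := by
    rw [hNP, Matrix.transpose_mul, Matrix.mul_assoc, ← Matrix.mul_assoc Uᵀ, hU,
      Matrix.one_mul, hPsym]
  have h2 : (Nᵀ * N - 1)ᵀ * (Nᵀ * N - 1) = (P * P - 1) * (P * P - 1) := by
    rw [hNN, Matrix.transpose_sub, Matrix.transpose_mul, hPsym, Matrix.transpose_one]
  -- key: trace ((P*P-1)^2) - trace ((P-1)^2) = trace ((P-1)*(P*P+2*P)*(P-1)) ≥ 0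
  have key : Matrix.trace ((P - 1) * (P - 1)) ≤
      Matrix.trace ((P * P - 1) * (P * P - 1)) := by
    have hfact : (P * P - 1) * (P * P - 1) - (P - 1) * (P - 1)
        = (P - 1) * (P * P + (P + P)) * (P - 1) := by
      noncomm_ring
    have hpsd : ((P - 1) * (P * P + (P + P)) * (P - 1)).PosSemidef := by
      have hmid : (P * P + (P + P)).PosSemidef := by
        have h2P : (P + P).PosSemidef := hP.add hP
        have hPP : (P * P).PosSemidef := by
          have := hP.pow 2
          rwa [pow_two] at this
        exact hPP.add h2P
      have := hmid.conjTranspose_mul_mul_same (P - 1)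
      have heq : (P - 1)ᴴ = P - 1 := by
        rw [Matrix.conjTranspose_eq_transpose_of_trivial, Matrix.transpose_sub, hPsym,
          Matrix.transpose_one]
      rwa [heq] at this
    have := trace_nonneg_of_psd hpsd
    rw [← hfact, Matrix.trace_sub] at this
    linarith
  rw [frobNorm, frobNorm, h1, h2]
  exact Real.sqrt_le_sqrt key
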